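/- Let (h_j) be a normalized valid packing of a finite set J' of jobs inside one round with uniform edge capacity c*. Then for every job j ∈ J' there exist k ≥ 1 and distinct jobs j_1, j_2, …, j_k ∈ J' with j_1 = j such that P_{j_i} ∩ P_{j_{i+1}} ≠ ∅ and h_{j_i} + d_{j_i} = h_{j_{i+1}} for all 1 ≤ i < k, and h_{j_k} + d_{j_k} = c*; consequently h_j = c* − (d_{j_1} + d_{j_2} + ⋯ + d_{j_k}), i.e., every height in a normalized packing equals c* minus a sum of demands of distinct jobs forming a chain starting at j. -/

import Mathlib

open scoped Classical

namespace PathUFP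

variable {ι : Type*}

/-- Job `i` uses the edge `e_{k+1}` (for `k : Fin m`, edges being 1-indexed
`e_1, …, e_m`) iff `s_i < k + 1 ≤ t_i`, i.e. iff `s_i ≤ k < t_i`. -/
def uses (s t : ι → ℕ) {m : ℕ} (i : ι) (k : Fin m) : Prop :=
  s i ≤ (k : ℕ) ∧ (k : ℕ) < t i

/-- The paths of two jobs intersect: they use a common edge. -/
def pathsIntersect (s t : ι → ℕ) (i j : ι) : Prop :=
  ∃ k : ℕ, (s i ≤ k ∧ k < t i) ∧ (s j ≤ k ∧ k < t j)

/-- The open rectangle `(s_i, t_i) × (h_i, h_i + d_i)` of job `i` drawn at height `h i`. -/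
def rect (s t : ι → ℕ) (d h : ι → ℝ) (i : ι) : Set (ℝ × ℝ) :=
  Set.Ioo (s i : ℝ) (t i : ℝ) ×ˢ Set.Ioo (h i) (h i + d i)

/-- `h` is a valid packing of the jobs inside one round with uniform edge capacity
`cstar`: heights are nonnegative, every job fits below the capacity, and the open
rectangles are pairwise disjoint. -/
def ValidPacking (s t : ι → ℕ) (d : ι → ℝ) (cstar : ℝ) (h : ι → ℝ) : Prop :=
  (∀ i, 0 ≤ h i) ∧ (∀ i, h i + d i ≤ cstar) ∧
  (∀ i j, i ≠ j → Disjoint (rect s t d h i) (rect s t d h j))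

/-- A packing is normalized if every job either touches the capacity from below, or
its top touches the bottom of another job whose path intersects its own path. -/
def Normalized (s t : ι → ℕ) (d : ι → ℝ) (cstar : ℝ) (h : ι → ℝ) : Prop :=
  ∀ i, h i + d i = cstar ∨ ∃ j, h i + d i = h j ∧ pathsIntersect s t i j

end PathUFP

open PathUFP in
/-- Let `h` be a normalized valid packing of a finite set `J'` of jobs
inside one round with uniform edge capacity `c*`. Then for every job `j ∈ J'` there are
`k ≥ 1` distinct jobs `j_1, …, j_k ∈ J'` (a chain, given here as a nodup list `L` with
head `j`) with `j_1 = j`, such that consecutive jobs have intersecting paths and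
`h_{j_i} + d_{j_i} = h_{j_{i+1}}`, the last job satisfies `h_{j_k} + d_{j_k} = c*`, and
consequently `h_j = c* − (d_{j_1} + ⋯ + d_{j_k})`. -/
theorem normalized_packing_heights {ι : Type*} [Fintype ι] (m : ℕ)
    (s t : ι → ℕ) (d : ι → ℝ)
    (hst : ∀ i, s i < t i) (htm : ∀ i, t i ≤ m) (hd : ∀ i, 0 < d i)
    (cstar : ℝ) (hcstar : 0 < cstar)
    (h : ι → ℝ) (hvalid : ValidPacking s t d cstar h)
    (hnorm : Normalized s t d cstar h) :
    ∀ j : ι, ∃ L : List ι,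
      L.Nodup ∧
      L.head? = some j ∧
      L.Chain' (fun a b => pathsIntersect s t a b ∧ h a + d a = h b) ∧
      (∀ jlast : ι, L.getLast? = some jlast → h jlast + d jlast = cstar) ∧
      h j = cstar - (L.map d).sum := by
  classical
  have base : ∀ j : ι, h j + d j = cstar →
      ∃ L : List ι, L.Nodup ∧ L.head? = some j ∧
        L.Chain' (fun a b => pathsIntersect s t a b ∧ h a + d a = h b) ∧
        (∀ jlast : ι, L.getLast? = some jlast → h jlast + d jlast = cstar) ∧
        h j = cstar - (L.map d).sum ∧ (∀ x ∈ L, h j ≤ h x) := by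
    intro j htop
    refine ⟨[j], by simp, rfl, List.isChain_singleton j, ?_, by simp; linarith, by simp⟩
    intro jlast hl
    simp only [List.getLast?_singleton, Option.some.injEq] at hl
    subst hl; exact htop
  have key : ∀ n : ℕ, ∀ j : ι,
      (Finset.univ.filter (fun i => h j < h i)).card ≤ n →
      ∃ L : List ι, L.Nodup ∧ L.head? = some j ∧
        L.Chain' (fun a b => pathsIntersect s t a b ∧ h a + d a = h b) ∧
        (∀ jlast : ι, L.getLast? = some jlast → h jlast + d jlast = cstar) ∧
        h j = cstar - (L.map d).sum ∧ (∀ x ∈ L, h j ≤ h x) := by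
    intro n
    induction n with
    | zero =>
      intro j hcard
      rcases hnorm j with htop | ⟨j', hj', hint⟩
      · exact base j htop
      · exfalso
        have hlt : h j < h j' := by have := hd j; linarith
        have hmem : j' ∈ Finset.univ.filter (fun i => h j < h i) := by
          simp [hlt]
        have : (Finset.univ.filter (fun i => h j < h i)).card = 0 := Nat.le_zero.mp hcard
        rw [Finset.card_eq_zero] at this
        simp [this] at hmem
    | succ n ih =>
      intro j hcard
      rcases hnorm j with htop | ⟨j', hj', hint⟩
      · exact base j htop
      · have hlt : h j < h j' := by have := hd j; linarith
        have hss : (Finset.univ.filter (fun i => h j' < h i)) ⊂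
            (Finset.univ.filter (fun i => h j < h i)) := by
          constructor
          · intro x hx
            simp only [Finset.mem_filter, Finset.mem_univ, true_and] at hx ⊢
            linarith
          · intro hsub
            have : j' ∈ Finset.univ.filter (fun i => h j' < h i) := by
              apply hsub; simp [hlt]
            simp at this
        have hcard' : (Finset.univ.filter (fun i => h j' < h i)).card ≤ n := by
          have := Finset.card_lt_card hss
          omega
        obtain ⟨L', hnd, hhd, hch, hlast, hsum, hall⟩ := ih j' hcard'
        refine ⟨j :: L', ?_, rfl, ?_, ?_, ?_, ?_⟩
        · rw [List.nodup_cons]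
          refine ⟨?_, hnd⟩
          intro hjm
          have := hall j hjm
          linarith
        · show List.IsChain _ (j :: L'); rw [List.isChain_cons]
          refine ⟨?_, hch⟩
          intro b hb
          rw [hhd] at hb
          simp only [Option.mem_def, Option.some.injEq] at hb
          subst hb
          exact ⟨hint, hj'⟩
        · intro jlast hl
          cases L' with
          | nil => simp at hhd
          | cons a l =>
            rw [List.getLast?_cons_cons] at hl
            exact hlast jlast hl
        · simp only [List.map_cons, List.sum_cons]
          linarith
        · intro x hx
          rcases List.mem_cons.mp hx with rfl | hx'
          · exact le_refl _
          · exact le_trans hlt.le (hall x hx')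
  intro j
  obtain ⟨L, h1, h2, h3, h4, h5, _⟩ :=
    key (Finset.univ.filter (fun i => h j < h i)).card j le_rfl
  exact ⟨L, h1, h2, h3, h4, h5⟩
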